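/- Let 𝔽_q be a finite field of odd characteristic, f ∈ 𝔽_q[x] a monic quadratic with critical point γ and orbit type (2,n) for some n ≥ 1, and g ∈ 𝔽_q[x] a monic irreducible polynomial of even degree whose f-type starts with ns (i.e., g(b₁) is a nonsquare and g(b₂) is a square in 𝔽_q, where b_i = f^i(γ)). Suppose g(f(x)) is irreducible and g(f²(x)) = h(x-γ)h(-(x-γ)) with h ∈ 𝔽_q[x] monic irreducible, and all iterates are separable. Then h(b_n - γ) is a square in 𝔽_q, and consequently every irreducible factor of g(f²(x)) takes a square value at b_n. -/

import Mathlib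

open Polynomial

namespace Stmt19Aux


lemma geom_aux (s : ℕ) : ∀ n : ℕ, (∑ i ∈ Finset.range n, (s + 1) ^ i) * s + 1 = (s + 1) ^ n := by
  intro n
  induction n with
  | zero => simp
  | succ n ih =>
    rw [Finset.sum_range_succ, add_mul, add_right_comm, ih, pow_succ, mul_add, mul_one]
    ring

variable {F : Type*} [Field F] [Fintype F]

lemma exists_frob (F : Type*) [Field F] [Fintype F] (K : Type*) [Field K] [Algebra F K] (j : ℕ) :
    ∃ σ : K →+* K, ∀ x : K, σ x = x ^ (Fintype.card F) ^ j := by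
  set p := ringChar F with hp
  haveI hchp : CharP F p := ringChar.charP F
  have hprime : p.Prime := CharP.char_is_prime F p
  haveI : Fact p.Prime := ⟨hprime⟩
  obtain ⟨n, -, hcard⟩ := FiniteField.card F p
  haveI : CharP K p := charP_of_injective_algebraMap (algebraMap F K).injective p
  refine ⟨iterateFrobenius K p ((n : ℕ) * j), fun x => ?_⟩
  rw [iterateFrobenius_def, hcard, ← pow_mul]

lemma frob_comp_algebraMap {K : Type*} [Field K] [Algebra F K] {σ : K →+* K} {j : ℕ}
    (hσ : ∀ x : K, σ x = x ^ (Fintype.card F) ^ j) :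
    σ.comp (algebraMap F K) = algebraMap F K :=
  RingHom.ext fun a => by rw [RingHom.comp_apply, hσ, ← map_pow, FiniteField.pow_card_pow]

lemma root_pow_card {K : Type*} [Field K] [Algebra F K]
    {p : F[X]} (hm : p.Monic) (hirr : Irreducible p) {x : K} (hx : aeval x p = 0) :
    x ^ (Fintype.card F) ^ p.natDegree = x := by
  classical
  haveI : Fact (Irreducible p) := ⟨hirr⟩
  letI : Fintype (AdjoinRoot p) := Module.fintypeOfFintype (AdjoinRoot.powerBasis hm.ne_zero).basis
  have hcardA : Fintype.card (AdjoinRoot p) = Fintype.card F ^ p.natDegree := by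
    rw [Module.card_fintype (AdjoinRoot.powerBasis hm.ne_zero).basis]
    rw [Fintype.card_fin]
    simp [AdjoinRoot.powerBasis]
  have hroot : aeval (AdjoinRoot.root p) p = 0 := by
    rw [aeval_def, AdjoinRoot.algebraMap_eq, AdjoinRoot.eval₂_root]
  have hmin : p = minpoly F (AdjoinRoot.root p) :=
    minpoly.eq_of_irreducible_of_monic hirr hroot hm
  have hdvd : minpoly F (AdjoinRoot.root p) ∣ (X ^ Fintype.card F ^ p.natDegree - X : F[X]) :=
    minpoly.dvd F _ (by rw [map_sub, map_pow, aeval_X, ← hcardA, FiniteField.pow_card, sub_self])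
  rw [← hmin] at hdvd
  obtain ⟨w, hw⟩ := hdvd
  have h0 : aeval x (X ^ Fintype.card F ^ p.natDegree - X : F[X]) = 0 := by
    rw [hw, map_mul, hx, zero_mul]
  rw [map_sub, map_pow, aeval_X, sub_eq_zero] at h0
  exact h0

lemma not_fixed {K : Type*} [Field K] [Algebra F K]
    {p : F[X]} (hm : p.Monic) (hirr : Irreducible p) {x : K} (hx : aeval x p = 0)
    {j : ℕ} (hj0 : j ≠ 0) (hj : j < p.natDegree)
    (hfix : x ^ (Fintype.card F) ^ j = x) : False := by
  classical
  haveI : Fact (Irreducible p) := ⟨hirr⟩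
  set q := Fintype.card F with hqdef
  have hq1 : 1 < q := Fintype.one_lt_card
  have hmin : p = minpoly F x := minpoly.eq_of_irreducible_of_monic hirr hx hm
  have hdvd : p ∣ (X ^ q ^ j - X : F[X]) := by
    rw [hmin]
    apply minpoly.dvd
    rw [map_sub, map_pow, aeval_X, hfix, sub_self]
  letI : Fintype (AdjoinRoot p) := Module.fintypeOfFintype (AdjoinRoot.powerBasis hm.ne_zero).basis
  have hcardA : Fintype.card (AdjoinRoot p) = q ^ p.natDegree := by
    rw [Module.card_fintype (AdjoinRoot.powerBasis hm.ne_zero).basis]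
    rw [Fintype.card_fin]
    simp [AdjoinRoot.powerBasis, hqdef]
  set r := AdjoinRoot.root p with hr
  have hroot : aeval r p = 0 := by
    rw [hr, aeval_def, AdjoinRoot.algebraMap_eq, AdjoinRoot.eval₂_root]
  have hrfix : r ^ q ^ j = r := by
    obtain ⟨w, hw⟩ := hdvd
    have h0 : aeval r (X ^ q ^ j - X : F[X]) = 0 := by rw [hw, map_mul, hroot, zero_mul]
    rw [map_sub, map_pow, aeval_X, sub_eq_zero] at h0
    exact h0
  obtain ⟨σ, hσ⟩ := exists_frob F (AdjoinRoot p) j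
  have hfixall : ∀ y : AdjoinRoot p, y ^ q ^ j = y := by
    intro y
    induction y using AdjoinRoot.induction_on with
    | ih P =>
      have h2 : σ (aeval r P) = aeval r P := by
        rw [aeval_def, hom_eval₂, frob_comp_algebraMap hσ, hσ r, hrfix]
      rw [← AdjoinRoot.aeval_eq, ← hσ, h2]
  have hne : (X ^ q ^ j - X : (AdjoinRoot p)[X]) ≠ 0 :=
    FiniteField.X_pow_card_pow_sub_X_ne_zero _ hj0 hq1
  have hdeg : (X ^ q ^ j - X : (AdjoinRoot p)[X]).natDegree = q ^ j :=
    FiniteField.X_pow_card_pow_sub_X_natDegree_eq _ hj0 hq1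
  have hsub : (Finset.univ : Finset (AdjoinRoot p)) ⊆
      (X ^ q ^ j - X : (AdjoinRoot p)[X]).roots.toFinset := by
    intro y _
    rw [Multiset.mem_toFinset, mem_roots hne]
    simp [IsRoot, hfixall y]
  have hc1 : Fintype.card (AdjoinRoot p) ≤ q ^ j := by
    calc Fintype.card (AdjoinRoot p) = (Finset.univ : Finset (AdjoinRoot p)).card :=
          (Finset.card_univ).symm
      _ ≤ (X ^ q ^ j - X : (AdjoinRoot p)[X]).roots.toFinset.card := Finset.card_le_card hsub
      _ ≤ Multiset.card (X ^ q ^ j - X : (AdjoinRoot p)[X]).roots := Multiset.toFinset_card_le _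
      _ ≤ (X ^ q ^ j - X : (AdjoinRoot p)[X]).natDegree := card_roots' _
      _ = q ^ j := hdeg
  have hc2 : q ^ j < q ^ p.natDegree := Nat.pow_lt_pow_right hq1 hj
  omega

lemma eval_eq_pow {K : Type*} [Field K] [Fintype K] [Algebra F K]
    {h : F[X]} (hm : h.Monic) (hirr : Irreducible h)
    (hcardK : Fintype.card K = Fintype.card F ^ h.natDegree)
    {ρ : K} (hρ : aeval ρ h = 0) (τ : F) :
    algebraMap F K (h.eval τ) =
      (algebraMap F K τ - ρ) ^ (∑ i ∈ Finset.range h.natDegree, Fintype.card F ^ i) := by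
  classical
  set q := Fintype.card F with hqdef
  set D := h.natDegree with hDdef
  set T := algebraMap F K τ with hTdef
  have hq1 : 1 < q := Fintype.one_lt_card
  have hmin : h = minpoly F ρ := minpoly.eq_of_irreducible_of_monic hirr hρ hm
  have hKfix : ∀ y : K, y ^ q ^ D = y := by
    intro y; rw [← hcardK, FiniteField.pow_card]
  have hdvd : minpoly F ρ ∣ (X ^ q ^ D - X : F[X]) :=
    minpoly.dvd F _ (by rw [map_sub, map_pow, aeval_X, hKfix ρ, sub_self])
  rw [← hmin] at hdvd
  have hmapdvd : h.map (algebraMap F K) ∣ (X ^ Fintype.card K - X : K[X]) := by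
    have h1 := Polynomial.map_dvd (algebraMap F K) hdvd
    rw [Polynomial.map_sub, Polynomial.map_pow, map_X, ← hcardK] at h1
    exact h1
  have hbigne : (X ^ Fintype.card K - X : K[X]) ≠ 0 :=
    FiniteField.X_pow_card_sub_X_ne_zero _ Fintype.one_lt_card
  have hsplitsbig : Splits (X ^ Fintype.card K - X : K[X]) := by
    rw [splits_iff_card_roots, FiniteField.roots_X_pow_card_sub_X,
      FiniteField.X_pow_card_sub_X_natDegree_eq _ Fintype.one_lt_card]
    simp
  have hsplits : Splits (h.map (algebraMap F K)) :=
    Splits.of_dvd hsplitsbig hbigne hmapdvd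
  have hmapmonic : (h.map (algebraMap F K)).Monic := hm.map _
  have hmapdeg : (h.map (algebraMap F K)).natDegree = D := natDegree_map _
  have hrootscard : Multiset.card (h.map (algebraMap F K)).roots = D := by
    rw [← hmapdeg]; exact splits_iff_card_roots.mp hsplits
  have hrootpow : ∀ i : ℕ, aeval (ρ ^ q ^ i) h = 0 := by
    intro i
    obtain ⟨σ, hσ⟩ := exists_frob F K i
    have h2 : σ (aeval ρ h) = aeval (ρ ^ q ^ i) h := by
      rw [aeval_def, hom_eval₂, frob_comp_algebraMap hσ, hσ ρ, ← aeval_def]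
    rw [hρ, map_zero] at h2
    exact h2.symm
  have hinject : ∀ i j : ℕ, i < j → j < D → ρ ^ q ^ i = ρ ^ q ^ j → False := by
    intro i j hij hjD heq
    have h1 : (ρ ^ q ^ j) ^ q ^ (D - j) = ρ := by
      rw [← pow_mul, ← pow_add, Nat.add_sub_cancel' (le_of_lt hjD), hKfix]
    have h2 : ρ ^ q ^ (i + (D - j)) = ρ := by
      rw [pow_add, pow_mul, heq]
      exact h1
    exact not_fixed hm hirr hρ (by omega) (by omega) h2
  set R : Multiset K := (Multiset.range D).map fun i => ρ ^ q ^ i with hRdef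
  have hRnodup : R.Nodup := by
    refine Multiset.Nodup.map_on ?_ (Multiset.nodup_range D)
    intro i hi j hj heq
    rw [Multiset.mem_range] at hi hj
    rcases lt_trichotomy i j with h | h | h
    · exact absurd (hinject i j h hj heq) (by simp)
    · exact h
    · exact absurd (hinject j i h hi heq.symm) (by simp)
  have hRle : R ≤ (h.map (algebraMap F K)).roots := by
    rw [Multiset.le_iff_subset hRnodup]
    intro a ha
    rw [hRdef, Multiset.mem_map] at ha
    obtain ⟨i, -, rfl⟩ := ha
    rw [mem_roots hmapmonic.ne_zero, IsRoot, eval_map, ← aeval_def]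
    exact hrootpow i
  have hReq : R = (h.map (algebraMap F K)).roots := by
    refine Multiset.eq_of_le_of_card_le hRle ?_
    rw [hrootscard, hRdef]
    simp
  have hprod : h.map (algebraMap F K) = ((h.map (algebraMap F K)).roots.map fun a => X - C a).prod :=
    hsplits.eq_prod_roots_of_monic hmapmonic
  have heval1 : algebraMap F K (h.eval τ) = eval T (h.map (algebraMap F K)) := by
    rw [eval_map, hTdef, eval₂_hom]
  rw [heval1, hprod, ← hReq, eval_multiset_prod, hRdef]
  rw [Multiset.map_map, Multiset.map_map]
  have hfactor : ∀ i : ℕ, ((eval T) ∘ (fun a => X - C a) ∘ fun i : ℕ => ρ ^ q ^ i) i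
      = (T - ρ) ^ q ^ i := by
    intro i
    obtain ⟨σ, hσ⟩ := exists_frob F K i
    have hT : σ T = T := by
      rw [hTdef, ← RingHom.comp_apply, frob_comp_algebraMap hσ]
    have : (T - ρ) ^ q ^ i = σ (T - ρ) := (hσ _).symm
    rw [this, map_sub, hT]
    simp [hσ ρ, hqdef]
  calc ((Multiset.range D).map ((eval T) ∘ (fun a => X - C a) ∘ fun i : ℕ => ρ ^ q ^ i)).prod
      = ((Multiset.range D).map fun i : ℕ => (T - ρ) ^ q ^ i).prod := by
        rw [Multiset.map_congr rfl (fun i _ => hfactor i)]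
    _ = ∏ i ∈ Finset.range D, (T - ρ) ^ q ^ i := by
        rw [Finset.prod_eq_multiset_prod, Finset.range_val]
    _ = (T - ρ) ^ ∑ i ∈ Finset.range D, q ^ i := Finset.prod_pow_eq_pow_sum _ _ _

lemma core (hchar : ringChar F ≠ 2)
    (γ c : F) (fp : F[X]) (hfp : fp = (X - C γ) ^ 2 + C γ + C c)
    (g : F[X]) (hgm : g.Monic) (hgi : Irreducible g) (hgdeg : Even g.natDegree)
    (hirr1 : Irreducible (g.comp fp))
    (h : F[X]) (hhm : h.Monic) (hhi : Irreducible h)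
    (hfac : g.comp (fp.comp fp) = h.comp (X - C γ) * h.comp (-(X - C γ)))
    (τ : F) (hτ : τ ^ 2 = -(2 * c)) : ∃ s : F, h.eval τ = s ^ 2 := by
  classical
  by_cases h0 : h.eval τ = 0
  · exact ⟨0, by simp [h0]⟩
  set q := Fintype.card F with hqdef
  have hq1 : 1 < q := Fintype.one_lt_card
  have hqodd : q % 2 = 1 := FiniteField.odd_card_of_char_ne_two hchar
  obtain ⟨r, hr⟩ : ∃ r, q = 2 * r + 1 := ⟨q / 2, by omega⟩
  have htwo : (2 : F) ≠ 0 := Ring.two_ne_zero hchar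
  set e := g.natDegree with hedef
  have he0 : e ≠ 0 := by
    intro h'
    exact hgi.not_isUnit (by rw [hgm.natDegree_eq_zero.mp h']; exact isUnit_one)
  -- fp is monic of degree 2
  have hfp2 : fp = (X - C γ) ^ 2 + (C γ + C c) := by rw [hfp, add_assoc]
  have hsq : ((X - C γ) ^ 2 : F[X]).Monic := (monic_X_sub_C γ).pow 2
  have hsqdeg : ((X - C γ) ^ 2 : F[X]).degree = 2 := by
    rw [degree_pow, degree_X_sub_C]
    rfl
  have hdeglt : (C γ + C c : F[X]).degree < ((X - C γ) ^ 2 : F[X]).degree := by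
    rw [← C_add, hsqdeg]
    exact lt_of_le_of_lt (degree_C_le) (by norm_num)
  have hfpm : fp.Monic := by rw [hfp2]; exact hsq.add_of_left hdeglt
  have hfpd : fp.natDegree = 2 := by
    rw [hfp2]
    have : ((X - C γ) ^ 2 + (C γ + C c) : F[X]).degree = 2 := by
      rw [degree_add_eq_left_of_degree_lt hdeglt, hsqdeg]
    exact natDegree_eq_of_degree_eq_some this
  -- degrees
  have hgfm : (g.comp fp).Monic := hgm.comp hfpm (by rw [hfpd]; norm_num)
  have hgfd : (g.comp fp).natDegree = e * 2 := by rw [natDegree_comp, hfpd]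
  have hffm : (fp.comp fp).Monic := hfpm.comp hfpm (by rw [hfpd]; norm_num)
  have hLm : (g.comp (fp.comp fp)).Monic :=
    hgm.comp hffm (by rw [natDegree_comp, hfpd]; norm_num)
  have hAB : h.comp (X - C γ) ≠ 0 ∧ h.comp (-(X - C γ)) ≠ 0 := by
    have h1 := hLm.ne_zero
    rw [hfac] at h1
    exact mul_ne_zero_iff.mp h1
  have hD : h.natDegree = 2 * e := by
    have hd1 : (g.comp (fp.comp fp)).natDegree = e * 4 := by
      rw [natDegree_comp, natDegree_comp, hfpd]
    have hd2 : (h.comp (X - C γ)).natDegree = h.natDegree := by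
      rw [natDegree_comp, natDegree_X_sub_C, mul_one]
    have hd3 : (h.comp (-(X - C γ))).natDegree = h.natDegree := by
      rw [natDegree_comp, natDegree_neg, natDegree_X_sub_C, mul_one]
    have hd4 : e * 4 = h.natDegree + h.natDegree := by
      rw [← hd1, hfac, natDegree_mul hAB.1 hAB.2, hd2, hd3]
    omega
  -- the field K = AdjoinRoot h
  haveI : Fact (Irreducible h) := ⟨hhi⟩
  letI : Fintype (AdjoinRoot h) := Module.fintypeOfFintype (AdjoinRoot.powerBasis hhm.ne_zero).basis
  have hcardK : Fintype.card (AdjoinRoot h) = q ^ h.natDegree := by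
    rw [Module.card_fintype (AdjoinRoot.powerBasis hhm.ne_zero).basis]
    rw [Fintype.card_fin]
    simp [AdjoinRoot.powerBasis, hqdef]
  set ρ := AdjoinRoot.root h with hρdef
  have hρ : aeval ρ h = 0 := by
    rw [hρdef, aeval_def, AdjoinRoot.algebraMap_eq, AdjoinRoot.eval₂_root]
  set Γ : AdjoinRoot h := algebraMap F (AdjoinRoot h) γ with hΓdef
  set Cc : AdjoinRoot h := algebraMap F (AdjoinRoot h) c with hCcdef
  set T : AdjoinRoot h := algebraMap F (AdjoinRoot h) τ with hTdef
  have hKfix : ∀ y : AdjoinRoot h, y ^ q ^ h.natDegree = y := by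
    intro y; rw [← hcardK, FiniteField.pow_card]
  have hexp : ∀ x : AdjoinRoot h, aeval x fp = (x - Γ) ^ 2 + Γ + Cc := by
    intro x
    rw [hfp]
    simp only [map_add, map_pow, map_sub, aeval_X, aeval_C, hΓdef, hCcdef]
  -- Γ + ρ is a root of g ∘ fp ∘ fp
  have hroot2 : aeval (Γ + ρ) (g.comp (fp.comp fp)) = 0 := by
    rw [hfac, map_mul]
    have h1 : aeval (Γ + ρ) (h.comp (X - C γ)) = 0 := by
      rw [aeval_comp, map_sub, aeval_X, aeval_C, ← hΓdef]
      have h2 : Γ + ρ - Γ = ρ := by ring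
      rw [h2, hρ]
    rw [h1, zero_mul]
  set α : AdjoinRoot h := aeval (Γ + ρ) fp with hαdef
  have hα : α = ρ ^ 2 + Γ + Cc := by rw [hαdef, hexp]; ring
  have hαroot : aeval α (g.comp fp) = 0 := by
    have h2 : aeval (Γ + ρ) ((g.comp fp).comp fp) = 0 := by rw [comp_assoc]; exact hroot2
    rw [aeval_comp] at h2
    exact h2
  set δ : AdjoinRoot h := aeval α fp with hδdef
  have hδroot : aeval δ g = 0 := by
    have h3 := hαroot
    rw [aeval_comp] at h3
    exact h3
  have hδfix : δ ^ q ^ e = δ := root_pow_card hgm hgi hδroot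
  obtain ⟨σ, hσ⟩ := exists_frob F (AdjoinRoot h) e
  have hσalg : ∀ a : F, σ (algebraMap F (AdjoinRoot h) a) = algebraMap F (AdjoinRoot h) a :=
    fun a => by rw [hσ, ← map_pow, FiniteField.pow_card_pow]
  have haevalσ : ∀ (x : AdjoinRoot h) (P : F[X]), σ (aeval x P) = aeval (σ x) P := by
    intro x P
    rw [aeval_def, hom_eval₂, frob_comp_algebraMap hσ, ← aeval_def]
  have hσΓ : σ Γ = Γ := hσalg γ
  have hσCc : σ Cc = Cc := hσalg c
  have hσT : σ T = T := hσalg τ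
  -- σ α = 2Γ - α
  have h3 : (σ α - Γ) ^ 2 = (α - Γ) ^ 2 := by
    have h4 : σ δ = δ := by rw [hσ]; exact hδfix
    have h5 : aeval (σ α) fp = δ := by rw [← haevalσ, ← hδdef, h4]
    rw [hexp] at h5
    have h6 : δ = (α - Γ) ^ 2 + Γ + Cc := by rw [hδdef, hexp]
    rw [h6] at h5
    linear_combination h5
  have hσα : σ α = 2 * Γ - α := by
    have hfactored : (σ α - α) * (σ α + α - 2 * Γ) = 0 := by linear_combination h3
    rcases mul_eq_zero.mp hfactored with h4 | h4
    · exfalso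
      have h5 : α ^ q ^ e = α := by rw [← hσ]; exact sub_eq_zero.mp h4
      exact not_fixed hgfm hirr1 hαroot he0 (by rw [hgfd]; omega) h5
    · linear_combination h4
  -- s := σ ρ satisfies s² = T² - ρ²
  have hρ2 : ρ ^ 2 = α - Γ - Cc := by rw [hα]; ring
  have hT2 : T ^ 2 = -(2 * Cc) := by
    rw [hTdef, hCcdef, ← map_pow, hτ, map_neg, map_mul, map_ofNat]
  have hs2 : (σ ρ) ^ 2 = T ^ 2 - ρ ^ 2 := by
    have h4 : (σ ρ) ^ 2 = σ (ρ ^ 2) := (map_pow σ ρ 2).symm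
    rw [h4, hρ2, map_sub, map_sub, hσΓ, hσCc, hσα, hT2, hα]
    ring
  -- the element u = T - ρ
  set u : AdjoinRoot h := T - ρ with hudef
  have heval : algebraMap F (AdjoinRoot h) (h.eval τ) =
      u ^ (∑ i ∈ Finset.range h.natDegree, q ^ i) := eval_eq_pow hhm hhi hcardK hρ τ
  set M := ∑ i ∈ Finset.range h.natDegree, q ^ i with hMdef
  have hM0 : 0 < M := by
    apply Finset.sum_pos (fun i _ => pow_pos (by omega) i)
    rw [Finset.nonempty_range_iff]
    omega
  have hu0 : u ≠ 0 := by
    intro h4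
    rw [h4, zero_pow (by omega)] at heval
    exact h0 ((algebraMap F (AdjoinRoot h)).injective (by rw [heval, map_zero]))
  -- Q = q^e is odd
  obtain ⟨m, hQm⟩ : ∃ m, q ^ e = 2 * m + 1 := by
    have h4 : Odd (q ^ e) := (Nat.odd_iff.mpr hqodd).pow
    exact h4
  have huQ : u ^ q ^ e = T - σ ρ := by rw [← hσ, map_sub, hσT]
  set w : AdjoinRoot h := T - ρ - σ ρ with hwdef
  have hkey : (2 : AdjoinRoot h) * (u ^ q ^ e * u) = w ^ 2 := by
    rw [huQ, hudef, hwdef]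
    linear_combination -hs2
  have h2K : (2 : AdjoinRoot h) ≠ 0 := by
    intro h4
    have h5 : algebraMap F (AdjoinRoot h) 2 = 0 := by rw [map_ofNat]; exact h4
    exact htwo ((algebraMap F (AdjoinRoot h)).injective (by rw [h5, map_zero]))
  have hw0 : w ≠ 0 := by
    intro h4
    rw [h4] at hkey
    have h5 : u ^ q ^ e * u = 0 := by
      rcases mul_eq_zero.mp (by rw [hkey]; ring : (2 : AdjoinRoot h) * (u ^ q ^ e * u) = 0) with h6 | h6
      · exact absurd h6 h2K
      · exact h6
    rcases mul_eq_zero.mp h5 with h6 | h6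
    · exact hu0 (pow_eq_zero_iff (by positivity) |>.mp h6)
    · exact hu0 h6
  have hσσρ : σ (σ ρ) = ρ := by
    rw [hσ, hσ, ← pow_mul, ← pow_add]
    have h4 : e + e = h.natDegree := by omega
    rw [h4, hKfix]
  have hwQ : w ^ q ^ e = w := by
    rw [← hσ]
    have h4 : σ w = T - σ ρ - ρ := by rw [hwdef, map_sub, map_sub, hσT, hσσρ]
    rw [h4, hwdef]
    ring
  have hw2m : w ^ (2 * m) = 1 := by
    have h4 : w ^ (2 * m) * w = 1 * w := by
      rw [one_mul, ← pow_succ, ← hQm, hwQ]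
    exact mul_right_cancel₀ hw0 h4
  -- (2 : K)^m = 1
  have h2m : (2 : AdjoinRoot h) ^ m = 1 := by
    obtain ⟨e', he'⟩ := hgdeg
    have hdvd1 : q ^ 2 - 1 ∣ q ^ e - 1 := by
      have h4 := Nat.sub_dvd_pow_sub_pow (q ^ 2) 1 e'
      rw [one_pow, ← pow_mul] at h4
      have h5 : 2 * e' = e := by omega
      rw [h5] at h4
      exact h4
    have h5 : q ^ 2 - 1 = 2 * r * 2 * (r + 1) := Nat.sub_eq_of_eq_add (by rw [hr]; ring)
    have h6 : q ^ e - 1 = 2 * m := Nat.sub_eq_of_eq_add (by omega)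
    rw [h5, h6] at hdvd1
    have h7 : 2 * (2 * r) ∣ 2 * m :=
      dvd_trans (by rw [show 2 * (2 * r) = 2 * r * 2 by ring]; exact dvd_mul_right _ _) hdvd1
    have h8 : 2 * r ∣ m := (mul_dvd_mul_iff_left (by norm_num : (2:ℕ) ≠ 0)).mp h7
    obtain ⟨t, ht⟩ := h8
    have h9 : (2 : F) ^ m = 1 := by
      rw [ht, pow_mul]
      have h10 : (2 : F) ^ (2 * r) = 1 := by
        have h11 : q - 1 = 2 * r := by omega
        rw [← h11]
        exact FiniteField.pow_card_sub_one_eq_one 2 htwo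
      rw [h10, one_pow]
    have h12 := congrArg (algebraMap F (AdjoinRoot h)) h9
    rw [map_pow, map_ofNat, map_one] at h12
    exact h12
  -- u ^ ((q^e+1) * m) = 1
  have hupow : u ^ ((q ^ e + 1) * m) = 1 := by
    have h4 : ((2 : AdjoinRoot h) * (u ^ q ^ e * u)) ^ m = 1 := by
      rw [hkey, ← pow_mul]
      exact hw2m
    rw [mul_pow, h2m, one_mul] at h4
    rw [pow_mul, pow_succ]
    exact h4
  -- geometric sum bookkeeping
  have hgeom := geom_aux (2 * r) h.natDegree
  rw [← hr] at hgeom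
  rw [← hMdef] at hgeom
  have hQQ : q ^ h.natDegree = (q ^ e + 1) * (2 * m) + 1 := by
    have h4 : q ^ h.natDegree = q ^ e * q ^ e := by
      rw [← pow_add]
      congr 1
      omega
    rw [h4, hQm]
    ring
  have h10 : M * (2 * r) = (q ^ e + 1) * (2 * m) := Nat.add_right_cancel (hgeom.trans hQQ)
  have h9 : M * r = (q ^ e + 1) * m := by
    have h11 : 2 * (M * r) = 2 * ((q ^ e + 1) * m) := by
      calc 2 * (M * r) = M * (2 * r) := by ring
        _ = (q ^ e + 1) * (2 * m) := h10
        _ = 2 * ((q ^ e + 1) * m) := by ring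
    exact Nat.eq_of_mul_eq_mul_left (by norm_num) h11
  have hfin : (h.eval τ) ^ r = 1 := by
    apply (algebraMap F (AdjoinRoot h)).injective
    rw [map_pow, heval, ← pow_mul, h9, hupow, map_one]
  have hsq : IsSquare (h.eval τ) := by
    rw [FiniteField.isSquare_iff hchar h0]
    have hqr : Fintype.card F / 2 = r := by rw [← hqdef]; omega
    rw [hqr]
    exact hfin
  obtain ⟨s, hs⟩ := hsq
  exact ⟨s, by rw [hs, sq]⟩

lemma factor_eq {F : Type*} [Field F] {h H : F[X]} (hhm : h.Monic) (hhi : Irreducible h)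
    (hHm : H.Monic) (hHi : Irreducible H) (L M : F[X])
    (hLM : L.comp M = X) (hML : M.comp L = X)
    (hMdeg : M.natDegree = 1)
    (hunit : leadingCoeff M ^ h.natDegree = 1)
    (hd : H ∣ h.comp L) : H = h.comp L := by
  obtain ⟨w, hw⟩ := hd
  have h1 : H.comp M * w.comp M = h := by
    rw [← mul_comp, ← hw, comp_assoc, hLM, comp_X]
  have hH1 : H.natDegree ≠ 0 := fun h' =>
    hHi.not_isUnit (by rw [hHm.natDegree_eq_zero.mp h']; exact isUnit_one)
  have hHMdeg : (H.comp M).natDegree = H.natDegree := by rw [natDegree_comp, hMdeg, mul_one]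
  have hHM0 : H.comp M ≠ 0 := by
    intro h2
    rw [h2, zero_mul] at h1
    exact hhm.ne_zero h1.symm
  rcases hhi.isUnit_or_isUnit h1.symm with h4 | h4
  · exact absurd (by rw [← hHMdeg]; exact natDegree_eq_zero_of_isUnit h4) hH1
  · obtain ⟨a, haunit, ha⟩ := isUnit_iff.mp h4
    have ha0 : a ≠ 0 := haunit.ne_zero
    have hdegH : H.natDegree = h.natDegree := by
      have h5 := congrArg natDegree h1
      rw [← ha, natDegree_mul hHM0 (by simpa using ha0), natDegree_C, add_zero, hHMdeg] at h5
      exact h5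
    have hlc2 : leadingCoeff (H.comp M) = 1 := by
      rw [leadingCoeff_comp (by rw [hMdeg]; norm_num), hHm.leadingCoeff, one_mul, hdegH]
      exact hunit
    have hlc : (1 : F) * a = 1 := by
      have h5 := congrArg leadingCoeff h1
      rw [← ha, leadingCoeff_mul, leadingCoeff_C, hhm.leadingCoeff, hlc2] at h5
      exact h5
    have ha1 : a = 1 := by rw [one_mul] at hlc; exact hlc
    have h5 : H.comp M = h := by rw [← h1, ← ha, ha1, C_1, mul_one]
    rw [← h5, comp_assoc, hML, comp_X]


end Stmt19Aux

open Stmt19Aux in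
/-- Let `f(x) = (x-γ)² + γ + c` be a monic quadratic over a finite field of odd
characteristic with orbit type `(2,n)`, and `g` monic irreducible of even degree whose `f`-type
starts with `ns` (i.e. `g(b₁)` is a nonsquare and `g(b₂)` is a square), with all iterates
`g(f^i(x))` separable, `g(f(x))` irreducible, and `g(f²(x)) = h(x-γ)·h(-(x-γ))` for a monic
irreducible `h`. Then `h(b_n - γ)` is a square in `𝔽_q`, and consequently every monic
irreducible factor of `g(f²(x))` takes a square value at `b_n`. -/
theorem stmt19 {F : Type*} [Field F] [Fintype F] (hchar : ringChar F ≠ 2)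
    (γ c : F) (f : F → F) (hf : ∀ x, f x = (x - γ) ^ 2 + γ + c)
    (fp : Polynomial F) (hfp : fp = (X - C γ) ^ 2 + C γ + C c)
    (n : ℕ) (hn : 1 ≤ n)
    (horb : f^[2 + n] γ = f^[2] γ)
    (hmin : ∀ m' n' : ℕ, 1 ≤ n' → f^[m' + n'] γ = f^[m'] γ → 2 ≤ m' ∧ n ≤ n')
    (g : Polynomial F) (hgm : g.Monic) (hgi : Irreducible g) (hgdeg : Even g.natDegree)
    (htype_n : ¬ ∃ s : F, g.eval (f^[1] γ) = s ^ 2)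
    (htype_s : ∃ s : F, g.eval (f^[2] γ) = s ^ 2)
    (hsep : ∀ i : ℕ, ((fun p : Polynomial F => p.comp fp)^[i] g).Separable)
    (hirr1 : Irreducible (g.comp fp))
    (h : Polynomial F) (hhm : h.Monic) (hhi : Irreducible h)
    (hfac : g.comp (fp.comp fp) = h.comp (X - C γ) * h.comp (-(X - C γ))) :
    (∃ s : F, h.eval (f^[n] γ - γ) = s ^ 2) ∧
    (∀ H : Polynomial F, H.Monic → Irreducible H → H ∣ g.comp (fp.comp fp) →
      ∃ s : F, H.eval (f^[n] γ) = s ^ 2) := by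
  -- orbit facts
  have hb1 : f γ = γ + c := by rw [hf]; ring
  have horb' : f (f^[1 + n] γ) = f (f γ) := by
    have h1 : f^[2 + n] γ = f (f^[1 + n] γ) := by
      rw [show 2 + n = (1 + n) + 1 by omega, Function.iterate_succ_apply' f (1 + n) γ]
    have h2 : f^[2] γ = f (f γ) := by
      rw [show (2 : ℕ) = 1 + 1 from rfl, Function.iterate_succ_apply' f 1 γ,
        Function.iterate_one]
    rw [← h1, ← h2, horb]
  have hne : f^[1 + n] γ ≠ f γ := by
    intro h1
    have h2 := (hmin 1 n hn (by rw [Function.iterate_one]; exact h1)).1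
    omega
  have hval : f^[1 + n] γ = γ - c := by
    have h1 : (f^[1 + n] γ - γ) ^ 2 + γ + c = (f γ - γ) ^ 2 + γ + c := by
      rw [← hf, ← hf]; exact horb'
    have h3 : (f^[1 + n] γ - f γ) * (f^[1 + n] γ + f γ - 2 * γ) = 0 := by
      linear_combination h1
    rcases mul_eq_zero.mp h3 with h4 | h4
    · exact absurd (by linear_combination h4) hne
    · rw [hb1] at h4
      linear_combination h4
  have hτsq : (f^[n] γ - γ) ^ 2 = -(2 * c) := by
    have h1 : f (f^[n] γ) = γ - c := by
      rw [← hval, show 1 + n = n + 1 by omega, Function.iterate_succ_apply']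
    rw [hf] at h1
    linear_combination h1
  have hpart1 : ∃ s : F, h.eval (f^[n] γ - γ) = s ^ 2 :=
    core hchar γ c fp hfp g hgm hgi hgdeg hirr1 h hhm hhi hfac _ hτsq
  refine ⟨hpart1, ?_⟩
  -- degree of h is even
  have hfp2 : fp = (X - C γ) ^ 2 + (C γ + C c) := by rw [hfp, add_assoc]
  have hsq : ((X - C γ) ^ 2 : F[X]).Monic := (monic_X_sub_C γ).pow 2
  have hsqdeg : ((X - C γ) ^ 2 : F[X]).degree = 2 := by
    rw [degree_pow, degree_X_sub_C]; rfl
  have hdeglt : (C γ + C c : F[X]).degree < ((X - C γ) ^ 2 : F[X]).degree := by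
    rw [← C_add, hsqdeg]
    exact lt_of_le_of_lt (degree_C_le) (by norm_num)
  have hfpm : fp.Monic := by rw [hfp2]; exact hsq.add_of_left hdeglt
  have hfpd : fp.natDegree = 2 := by
    rw [hfp2]
    have : ((X - C γ) ^ 2 + (C γ + C c) : F[X]).degree = 2 := by
      rw [degree_add_eq_left_of_degree_lt hdeglt, hsqdeg]
    exact natDegree_eq_of_degree_eq_some this
  have hffm : (fp.comp fp).Monic := hfpm.comp hfpm (by rw [hfpd]; norm_num)
  have hLm : (g.comp (fp.comp fp)).Monic :=
    hgm.comp hffm (by rw [natDegree_comp, hfpd]; norm_num)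
  have hAB : h.comp (X - C γ) ≠ 0 ∧ h.comp (-(X - C γ)) ≠ 0 := by
    have h1 := hLm.ne_zero
    rw [hfac] at h1
    exact mul_ne_zero_iff.mp h1
  have hD : Even h.natDegree := by
    have hd1 : (g.comp (fp.comp fp)).natDegree = g.natDegree * 4 := by
      rw [natDegree_comp, natDegree_comp, hfpd]
    have hd2 : (h.comp (X - C γ)).natDegree = h.natDegree := by
      rw [natDegree_comp, natDegree_X_sub_C, mul_one]
    have hd3 : (h.comp (-(X - C γ))).natDegree = h.natDegree := by
      rw [natDegree_comp, natDegree_neg, natDegree_X_sub_C, mul_one]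
    have hd4 : g.natDegree * 4 = h.natDegree + h.natDegree := by
      rw [← hd1, hfac, natDegree_mul hAB.1 hAB.2, hd2, hd3]
    exact ⟨g.natDegree, by omega⟩
  intro H hHm hHi hdvd
  rw [hfac] at hdvd
  have hHp : Prime H := UniqueFactorizationMonoid.irreducible_iff_prime.mp hHi
  rcases hHp.2.2 _ _ hdvd with hd | hd
  · -- H = h.comp (X - C γ)
    have hHeq : H = h.comp (X - C γ) := by
      refine factor_eq hhm hhi hHm hHi (X - C γ) (X + C γ) ?_ ?_ ?_ ?_ hd
      · rw [sub_comp, X_comp, C_comp]; ring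
      · rw [add_comp, X_comp, C_comp]; ring
      · exact natDegree_X_add_C γ
      · rw [(monic_X_add_C γ).leadingCoeff, one_pow]
    rw [hHeq, eval_comp, eval_sub, eval_X, eval_C]
    exact hpart1
  · -- H = h.comp (-(X - C γ))
    have hHeq : H = h.comp (-(X - C γ)) := by
      refine factor_eq hhm hhi hHm hHi (-(X - C γ)) (-(X - C γ)) ?_ ?_ ?_ ?_ hd
      · rw [neg_comp, sub_comp, X_comp, C_comp]; ring
      · rw [neg_comp, sub_comp, X_comp, C_comp]; ring
      · rw [natDegree_neg, natDegree_X_sub_C]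
      · rw [leadingCoeff_neg, (monic_X_sub_C γ).leadingCoeff]
        exact hD.neg_one_pow
    have hτsq' : (γ - f^[n] γ) ^ 2 = -(2 * c) := by linear_combination hτsq
    obtain ⟨s, hs⟩ := core hchar γ c fp hfp g hgm hgi hgdeg hirr1 h hhm hhi hfac _ hτsq'
    refine ⟨s, ?_⟩
    rw [hHeq, eval_comp, eval_neg, eval_sub, eval_X, eval_C]
    rw [show -(f^[n] γ - γ) = γ - f^[n] γ by ring]
    exact hs
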